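/- arXiv:2507.09136 — 2 statements merged into one kernel-verified Lean document; each statement's English description precedes it below -/
import Mathlib

section
/- Let L be any modal logic with Cl ⊆ L ⊆ Grz.3, closed under uniform substitution. With β_k as defined (δ₀ = □q, δ_{n+1} = q ∧ ◇(¬q ∧ ◇δ_n), α_n = δ_n ∧ ¬δ_{n+1}, β_n = ◇(p ∧ α_n)), let s be the substitution sending variable p_k to β_k. Then for every purely classical (modality-free) formula φ in variables p_1,...,p_n: φ is a classical tautology if and only if s(φ) ∈ L. -/
inductive MF : Type
  | var : ℕ → MF
  | bot : MF
  | imp : MF → MF → MF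
  | box : MF → MF

def MF.neg (a : MF) : MF := a.imp .bot
def MF.top : MF := MF.neg .bot
def MF.and (a b : MF) : MF := (a.imp b.neg).neg
def MF.or (a b : MF) : MF := a.neg.imp b
def MF.iff (a b : MF) : MF := (a.imp b).and (b.imp a)
def MF.dia (a : MF) : MF := (MF.box a.neg).neg
def MF.boxPlus (a : MF) : MF := a.and a.box

/-- Standard Kripke semantics. -/
def sat {W : Type} (R : W → W → Prop) (V : ℕ → W → Prop) : W → MF → Prop
  | w, .var n => V n w
  | _, .bot => False
  | w, .imp a b => sat R V w a → sat R V w b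
  | w, .box a => ∀ u, R w u → sat R V u a

/-- Modality-free (purely classical) formulas. -/
def MF.boxFree : MF → Prop
  | .var _ => True
  | .bot => True
  | .imp a b => a.boxFree ∧ b.boxFree
  | .box _ => False

/-- Variable-free formulas. -/
def MF.varFree : MF → Prop
  | .var _ => False
  | .bot => True
  | .imp a b => a.varFree ∧ b.varFree
  | .box a => a.varFree

/-- Classical Boolean evaluation (the `box` case is irrelevant: used on box-free formulas). -/
def evalb (v : ℕ → Bool) : MF → Bool
  | .var n => v n
  | .bot => false
  | .imp a b => !(evalb v a) || evalb v b
  | .box _ => false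

/-- Classical propositional logic: modality-free tautologies. -/
def Cl : Set MF := {φ | φ.boxFree ∧ ∀ v : ℕ → Bool, evalb v φ = true}

/-- Uniform substitution. -/
def subst (s : ℕ → MF) : MF → MF
  | .var n => s n
  | .bot => .bot
  | .imp a b => .imp (subst s a) (subst s b)
  | .box a => .box (subst s a)

def boxIter : ℕ → MF → MF
  | 0, a => a
  | n+1, a => .box (boxIter n a)

/-- The minimal normal modal logic K (semantically: validity in all Kripke frames). -/
def Ksem : Set MF := {φ | ∀ (W : Type) (R : W → W → Prop) (V : ℕ → W → Prop) (w : W), sat R V w φ}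

def pv : MF := .var 0
def qv : MF := .var 1

def delta : ℕ → MF
  | 0 => qv.box
  | n+1 => qv.and ((qv.neg.and (delta n).dia).dia)
def alpha (n : ℕ) : MF := (delta n).and (delta (n+1)).neg
def beta (n : ℕ) : MF := (pv.and (alpha n)).dia

def delta' : ℕ → MF
  | 0 => MF.bot.box
  | n+1 => (delta' n).dia
def alpha' (n : ℕ) : MF := (delta' n).and (delta' (n+1)).neg
def beta' (n : ℕ) : MF := (pv.and (alpha' n)).dia

def alpha'' (n : ℕ) : MF := ((MF.top.dia.boxPlus).dia).and ((delta' n).and (delta' (n+1)).neg)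
def beta'' (n : ℕ) : MF := (alpha'' n).dia

def grzAx : MF := ((((pv.imp pv.box).box).imp pv).box).imp pv
def lin3Ax : MF := (((pv.box).imp qv).box).or (((qv.box).imp pv).box)
def loebAx : MF := (((pv.box).imp pv).box).imp pv.box
def lin3'Ax : MF := (((pv.box).imp qv).box).or (((qv.boxPlus).imp pv).box)

/-- The frame ⟨ω ∪ {ω}, ≥⟩ : worlds are `ℕ∞`, `x R y` iff `x ≥ y`. -/
def Rge (x y : ℕ∞) : Prop := y ≤ x
/-- The frame ⟨ω ∪ {ω}, >⟩ : worlds are `ℕ∞`, `x R y` iff `x > y`. -/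
def Rgt (x y : ℕ∞) : Prop := y < x

/-- Raw worlds of the frame F''. -/
inductive CW : Type
  | root : CW
  | sink : CW
  | chain : ℕ → ℕ → CW

def CW.valid : CW → Prop
  | .chain k m => 1 ≤ k ∧ m ≤ k
  | _ => True

/-- Worlds of F'': `w`, `w*`, and `w^k_m` for `k ≥ 1`, `0 ≤ m ≤ k`. -/
def W'' : Type := {x : CW // x.valid}

/-- The accessibility relation of F'' (depending on the Boolean valuation `v`):
`w` sees `w*` and every `w^k_m` with `m ≥ 1`, but sees `w^k_0` only if `v k = true`;
`w^k_m R w^k_{m+1}`; `w^k_0 R w*`; `w*` has no successors. -/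
def Rc (v : ℕ → Bool) : CW → CW → Prop
  | .root, .sink => True
  | .root, .chain k m => 1 ≤ m ∨ v k = true
  | .chain k m, .chain k' m' => k' = k ∧ m' = m + 1
  | .chain _ m, .sink => m = 0
  | _, _ => False

def Rf (v : ℕ → Bool) (x y : W'') : Prop := Rc v x.val y.val

def wRoot : W'' := ⟨CW.root, trivial⟩
def wSink : W'' := ⟨CW.sink, trivial⟩
def wChain (k m : ℕ) (h : 1 ≤ k ∧ m ≤ k) : W'' := ⟨CW.chain k m, h⟩

/-- Grz.3, semantically: the logic of Noetherian linear partial orders. -/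
def Grz3sem : Set MF := {φ | ∀ (W : Type) (R : W → W → Prop),
  Reflexive R → Transitive R → (∀ x y, R x y → R y x → x = y) → (∀ x y, R x y ∨ R y x) →
  (¬ ∃ f : ℕ → W, ∀ i, R (f i) (f (i + 1)) ∧ f i ≠ f (i + 1)) →
  ∀ (V : ℕ → W → Prop) (w : W), sat R V w φ}


section Aux

lemma sat_neg' {W : Type} {R : W → W → Prop} {V : ℕ → W → Prop} {w : W} {a : MF} :
    sat R V w a.neg ↔ ¬ sat R V w a := Iff.rfl

lemma sat_and' {W : Type} {R : W → W → Prop} {V : ℕ → W → Prop} {w : W} {a b : MF} :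
    sat R V w (a.and b) ↔ (sat R V w a ∧ sat R V w b) := by
  simp only [MF.and, MF.neg, sat]; tauto

lemma sat_dia' {W : Type} {R : W → W → Prop} {V : ℕ → W → Prop} {w : W} {a : MF} :
    sat R V w a.dia ↔ ∃ u, R w u ∧ sat R V u a := by
  simp only [MF.dia, MF.neg, sat]
  constructor
  · intro h
    by_contra hc
    push_neg at hc
    exact h fun u hu hs => hc u hu hs
  · rintro ⟨u, hu, hs⟩ h
    exact h u hu hs

/-- The valuation on ℕ∞ induced by a Boolean valuation. -/
def Vv (v : ℕ → Bool) : ℕ → ℕ∞ → Prop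
  | 0, x => ∃ k : ℕ, x = ((2*k : ℕ) : ℕ∞) ∧ v k = true
  | 1, x => ∃ k : ℕ, x = ((2*k : ℕ) : ℕ∞)
  | _+2, _ => False

lemma sat_qv' {v : ℕ → Bool} {x : ℕ∞} :
    sat Rge (Vv v) x qv ↔ ∃ k : ℕ, x = ((2*k : ℕ) : ℕ∞) := Iff.rfl

lemma sat_pv' {v : ℕ → Bool} {x : ℕ∞} :
    sat Rge (Vv v) x pv ↔ ∃ k : ℕ, x = ((2*k : ℕ) : ℕ∞) ∧ v k = true := Iff.rfl

lemma rge_iff {x y : ℕ∞} : Rge x y ↔ y ≤ x := Iff.rfl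

lemma delta_char (v : ℕ → Bool) : ∀ n (x : ℕ∞), sat Rge (Vv v) x (delta n) ↔
    ((n = 0 ∧ x = 0) ∨ (1 ≤ n ∧ ∃ j : ℕ, x = ((2*j : ℕ) : ℕ∞) ∧ n ≤ j)) := by
  intro n
  induction n with
  | zero =>
    intro x
    simp only [delta, sat]
    constructor
    · intro h
      left
      refine ⟨trivial, ?_⟩
      by_contra hx
      obtain ⟨k, hk⟩ := h 1 (rge_iff.mpr (ENat.one_le_iff_ne_zero.mpr hx))
      rw [show ((1:ℕ∞) = ((1:ℕ):ℕ∞)) from rfl, Nat.cast_inj] at hk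
      omega
    · rintro (⟨-, rfl⟩ | ⟨h1, -⟩)
      · intro u hu
        rw [rge_iff, nonpos_iff_eq_zero] at hu
        exact ⟨0, by simp [hu, Vv]⟩
      · omega
  | succ n ih =>
    intro x
    have aux : ∀ y : ℕ∞, (∃ z, Rge y z ∧ sat Rge (Vv v) z (delta n)) ↔ ((2*n : ℕ) : ℕ∞) ≤ y := by
      intro y
      constructor
      · rintro ⟨z, hz, hs⟩
        rw [ih] at hs
        rcases hs with ⟨hn0, rfl⟩ | ⟨-, j, rfl, hj⟩
        · subst hn0; simp
        · refine le_trans ?_ hz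
          exact_mod_cast Nat.mul_le_mul_left 2 hj
      · intro hy
        refine ⟨((2*n : ℕ) : ℕ∞), hy, ?_⟩
        rw [ih]
        rcases Nat.eq_zero_or_pos n with rfl | hn
        · left; simp
        · right; exact ⟨hn, n, rfl, le_refl n⟩
    simp only [delta, sat_and', sat_dia', sat_neg', sat_qv']
    constructor
    · rintro ⟨⟨j, rfl⟩, y, hy, hnq, hz⟩
      have h2n : ((2*n : ℕ) : ℕ∞) ≤ y := (aux y).mp hz
      right
      refine ⟨Nat.le_add_left 1 n, j, rfl, ?_⟩
      rw [rge_iff] at hy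
      induction y using ENat.recTopCoe with
      | top => exact absurd (top_le_iff.mp hy) (WithTop.coe_ne_top)
      | coe m =>
        have hm : m ≠ 2 * (m / 2) := fun hk => hnq ⟨m / 2, by exact_mod_cast hk⟩
        rw [Nat.cast_le] at hy h2n
        omega
    · rintro (⟨h, -⟩ | ⟨-, j, rfl, hj⟩)
      · omega
      · refine ⟨⟨j, rfl⟩, ((2*n+1 : ℕ) : ℕ∞), ?_, ?_, ?_⟩
        · rw [rge_iff, Nat.cast_le]; omega
        · rintro ⟨k, hk⟩
          rw [Nat.cast_inj] at hk
          omega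
        · rw [aux, Nat.cast_le]; omega

lemma alpha_char (v : ℕ → Bool) (n : ℕ) (x : ℕ∞) :
    sat Rge (Vv v) x (alpha n) ↔ x = ((2*n : ℕ) : ℕ∞) := by
  simp only [alpha, sat_and', sat_neg', delta_char]
  constructor
  · rintro ⟨(⟨rfl, rfl⟩ | ⟨hn, j, rfl, hj⟩), h2⟩
    · simp
    · rw [Nat.cast_inj]
      rcases Nat.lt_or_ge j (n+1) with h | h
      · omega
      · exact absurd (Or.inr ⟨Nat.le_add_left 1 n, j, rfl, h⟩) h2
  · rintro rfl
    constructor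
    · rcases Nat.eq_zero_or_pos n with rfl | hn
      · left; simp
      · right; exact ⟨hn, n, rfl, le_refl n⟩
    · rintro (⟨h, -⟩ | ⟨-, j, hj, hj2⟩)
      · omega
      · rw [Nat.cast_inj] at hj; omega

lemma beta_top (v : ℕ → Bool) (n : ℕ) :
    sat Rge (Vv v) ⊤ (beta n) ↔ v n = true := by
  simp only [beta, sat_dia', sat_and', sat_pv', alpha_char]
  constructor
  · rintro ⟨u, -, ⟨k, rfl, hk⟩, hu⟩
    rw [Nat.cast_inj] at hu
    have : k = n := by omega
    rwa [this] at hk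
  · intro h
    exact ⟨((2*n : ℕ) : ℕ∞), rge_iff.mpr le_top, ⟨n, rfl, h⟩, rfl⟩

lemma subst_beta_sat (v : ℕ → Bool) :
    ∀ φ : MF, φ.boxFree →
      (sat Rge (Vv v) ⊤ (subst (fun k => beta k) φ) ↔ evalb v φ = true) := by
  intro φ
  induction φ with
  | var n => intro _; exact beta_top v n
  | bot => intro _; simp [subst, sat, evalb]
  | imp a b iha ihb =>
    rintro ⟨ha, hb⟩
    simp only [subst, sat, evalb, iha ha, ihb hb]
    cases evalb v a <;> cases evalb v b <;> simp
  | box a ih => intro h; exact absurd h id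

lemma noe_enat : ¬ ∃ f : ℕ → ℕ∞, ∀ i, Rge (f i) (f (i + 1)) ∧ f i ≠ f (i + 1) := by
  rintro ⟨f, hf⟩
  exact (RelEmbedding.natGT f fun i =>
    lt_of_le_of_ne (hf i).1 (Ne.symm (hf i).2)).not_wellFounded wellFounded_lt

end Aux

/-- for Cl ⊆ L ⊆ Grz.3 closed under substitution, a modality-free φ is a
classical tautology iff its substitution instance (p_k ↦ β_k) belongs to L. -/
theorem taut_iff_subst_beta_mem (L : Set MF)
    (hsub : ∀ (φ : MF) (s : ℕ → MF), φ ∈ L → subst s φ ∈ L)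
    (hCl : Cl ⊆ L) (hG : L ⊆ Grz3sem) :
    ∀ φ : MF, φ.boxFree → (φ ∈ Cl ↔ subst (fun k => beta k) φ ∈ L) := by
  intro φ hbf
  constructor
  · intro hφ
    exact hsub φ _ (hCl hφ)
  · intro hL
    refine ⟨hbf, fun v => ?_⟩
    have hsat := hG hL ℕ∞ Rge (fun x => le_refl x)
      (fun x y z hxy hyz => le_trans hyz hxy)
      (fun x y hxy hyx => le_antisymm hyx hxy)
      (fun x y => le_total y x)
      noe_enat (Vv v) ⊤
    exact (subst_beta_sat v φ hbf).mp hsat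
end

section
/- Every R-path in the frame F'' (of the variable-free reduction) has length at most k+2 where it passes through the k-th chain; in particular, F'' contains no infinite R-path and no R-cycle, so R on F'' is converse well-founded and irreflexive. -/
/-- Rank function on the frame F'': root has rank ⊤, sink rank 0, w^k_m rank k+1-m. -/
def muCW : CW → ℕ∞
  | .root => ⊤
  | .sink => 0
  | .chain k m => ((k + 1 - m : ℕ) : ℕ∞)

lemma mu_lt (v : ℕ → Bool) (x y : W'') (h : Rf v y x) : muCW x.val < muCW y.val := by
  obtain ⟨a, ha⟩ := x
  obtain ⟨b, hb⟩ := y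
  simp only [Rf] at h
  cases b with
  | root =>
    cases a with
    | root => exact absurd h (by simp [Rc])
    | sink => simp only [muCW]; exact WithTop.coe_lt_top (0 : ℕ)
    | chain k m => exact WithTop.coe_lt_top _
  | sink => exact absurd h (by simp [Rc])
  | chain k m =>
    have hkm : m ≤ k := hb.2
    cases a with
    | root => exact absurd h (by simp [Rc])
    | sink =>
      simp only [muCW]
      exact_mod_cast (by omega : 0 < k + 1 - m)
    | chain k' m' =>
      have h' : k' = k ∧ m' = m + 1 := h
      obtain ⟨rfl, rfl⟩ := h'
      simp only [muCW]
      exact_mod_cast (by omega : k' + 1 - (m + 1) < k' + 1 - m)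

lemma wf_no_desc {α : Type*} {r : α → α → Prop} (wf : WellFounded r)
    (f : ℕ → α) (hf : ∀ n, r (f (n + 1)) (f n)) : False := by
  have key : ∀ x, Acc r x → ∀ n, f n = x → False := by
    intro x hx
    induction hx with
    | intro y _ ih =>
      intro n hn
      exact ih (f (n + 1)) (hn ▸ hf n) (n + 1) rfl
  exact key (f 0) (wf.apply _) 0 rfl

lemma F''_wf (v : ℕ → Bool) : WellFounded (fun x y : W'' => Rf v y x) :=
  Subrelation.wf (fun {x y} h => mu_lt v x y h)
    (InvImage.wf (fun x : W'' => muCW x.val) wellFounded_lt)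

lemma no_succ_sink (v : ℕ → Bool) (x : W'') (h : x.val = CW.sink) (y : W'') :
    ¬ Rf v x y := by
  simp only [Rf, h]
  cases y.val <;> simp [Rc]

lemma F''_path_bound (v : ℕ → Bool) (f : ℕ → W'') (n : ℕ)
    (hstep : ∀ i, i < n → Rf v (f i) (f (i + 1)))
    (k m i : ℕ) (hi : i ≤ n) (hf : (f i).val = CW.chain k m) : n ≤ k + 2 := by
  have back : ∀ i, i ≤ n → ∀ k m, (f i).val = CW.chain k m → i ≤ m + 1 := by
    intro i
    induction i with
    | zero => intro _ _ _ _; omega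
    | succ j ih =>
      intro hjn k m hfj
      have hst : Rf v (f j) (f (j + 1)) := hstep j (by omega)
      simp only [Rf, hfj] at hst
      rcases hj : (f j).val with _ | _ | ⟨k', m'⟩
      · rcases Nat.eq_zero_or_pos j with h0 | hpos
        · omega
        · have hst' := hstep (j - 1) (by omega)
          have heq : j - 1 + 1 = j := by omega
          rw [heq] at hst'
          simp only [Rf, hj] at hst'
          exact absurd hst' (by cases (f (j-1)).val <;> simp [Rc])
      · rw [hj] at hst; exact absurd hst (by simp [Rc])
      · rw [hj] at hst
        have h1 : k = k' := hst.1
        have h2 : m = m' + 1 := hst.2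
        have := ih (by omega) k' m' hj
        omega
  have fwd : ∀ d, i + d < n → (f (i + d)).val = CW.chain k (m + d) := by
    intro d
    induction d with
    | zero => intro _; simpa using hf
    | succ e ih =>
      intro hlt
      have he : i + e < n := by omega
      have hfe := ih he
      have hst : Rf v (f (i + e)) (f (i + e + 1)) := hstep (i + e) he
      simp only [Rf, hfe] at hst
      rcases hj : (f (i + e + 1)).val with _ | _ | ⟨k', m'⟩
      · rw [hj] at hst; exact absurd hst (by simp [Rc])
      · exfalso
        exact no_succ_sink v _ hj _ (hstep (i + e + 1) (by omega))
      · rw [hj] at hst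
        have heq : i + (e + 1) = i + e + 1 := by omega
        obtain ⟨rfl, rfl⟩ : k' = k ∧ m' = m + e + 1 := hst
        rfl
  have him : i ≤ m + 1 := back i hi k m hf
  rcases Nat.lt_or_ge i n with hlt | hge
  · have := fwd (n - 1 - i) (by omega)
    have hv := (f (i + (n - 1 - i))).property
    rw [this] at hv
    have : m + (n - 1 - i) ≤ k := hv.2
    omega
  · have hv := (f i).property
    rw [hf] at hv
    have : m ≤ k := hv.2
    omega

/-- every R-path in F'' passing through the k-th chain has length at most
k+2; in particular F'' has no infinite R-path and no R-cycle: R is irreflexive and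
converse well-founded. -/
theorem F''_paths_finite (v : ℕ → Bool) :
    (∀ (f : ℕ → W'') (n : ℕ), (∀ i, i < n → Rf v (f i) (f (i + 1))) →
      ∀ (k m i : ℕ), i ≤ n → (f i).val = CW.chain k m → n ≤ k + 2) ∧
    (¬ ∃ f : ℕ → W'', ∀ i, Rf v (f i) (f (i + 1))) ∧
    (∀ x : W'', ¬ Rf v x x) ∧
    WellFounded (fun x y : W'' => Rf v y x) := by
  refine ⟨fun f n hs k m i hi hf => F''_path_bound v f n hs k m i hi hf, ?_, ?_, F''_wf v⟩
  · rintro ⟨f, hf⟩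
    exact wf_no_desc (F''_wf v) f (fun n => hf n)
  · intro x hx
    exact absurd (mu_lt v x x hx) (lt_irrefl _)
end
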